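/- Let V_π be a Poisson spray on the Poisson manifold (M, π) with flow φ_t, and let ω = ∫₀¹ (φ_t)*(ω_can) dt, defined near the zero section. Then for every x ∈ M and all v, w ∈ T_{0_x}(T*M), written in components as (v̄, θ_v) and (w̄, θ_w), one has ω_{0_x}(v, w) = ⟨θ_w, v̄⟩ − ⟨θ_v, w̄⟩ + π(θ_v, θ_w). In particular ω is nondegenerate at every point of the zero section. -/

import Mathlib

/-!
Formalization framework for "On the existence of symplectic realizations"
(Crainic–Mărcuț).  We work on a chart: the Poisson manifold is an open set
`U ⊆ ℝⁿ` (with `Vec n := Fin n → ℝ`), its cotangent bundle is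
`T*U = U × ℝⁿ ⊆ Pt n := Vec n × Vec n`, with bundle projection `Prod.fst`.
A bivector field is given by its components `Pb x p q = π_{pq}(x)`, a classical
connection on `TM` by its Christoffel symbols `Γ x p q r = Γ_{pq}^r(x)`.
-/

noncomputable section
open Set

namespace PoissonPaper

abbrev Vec (n : ℕ) := Fin n → ℝ
abbrev Pt (n : ℕ) := Vec n × Vec n

variable {n : ℕ}

/-- Partial derivative `∂_l f (x)`. -/
def pd (l : Fin n) (f : Vec n → ℝ) (x : Vec n) : ℝ :=
  fderiv ℝ f x (Pi.single l 1)

/-- The bundle map `π♯ : T*M → TM`, `β(π♯ α) = π(α, β)`;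
in components `(π♯ ξ)_q = ∑_p π_{pq} ξ_p`. -/
def sharp (Pb : Vec n → Fin n → Fin n → ℝ) (x ξ : Vec n) : Vec n :=
  fun q => ∑ p, Pb x p q * ξ p

/-- The Jacobiator of the bivector `Pb` on the coordinate functions:
`{{x_j,x_k},x_i} + {{x_k,x_i},x_j} + {{x_i,x_j},x_k}`; `π` is Poisson iff it
vanishes. -/
def jacobiator (Pb : Vec n → Fin n → Fin n → ℝ) (x : Vec n) (i j k : Fin n) : ℝ :=
  ∑ l, (Pb x l i * pd l (fun y => Pb y j k) x
      + Pb x l j * pd l (fun y => Pb y k i) x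
      + Pb x l k * pd l (fun y => Pb y i j) x)

/-- Components of the Schouten bracket `[π, π]` (with the convention
`[π,π](df,dg,dh) = 2({f,{g,h}} + {g,{h,f}} + {h,{f,g}})`). -/
def schouten (Pb : Vec n → Fin n → Fin n → ℝ) (x : Vec n) (i j k : Fin n) : ℝ :=
  -(2 * jacobiator Pb x i j k)

/-- `Pb` is a smooth bivector field (an antisymmetric 2-tensor) on `U`. -/
def IsBivectorOn (U : Set (Vec n)) (Pb : Vec n → Fin n → Fin n → ℝ) : Prop :=
  (∀ p q, ContDiffOn ℝ (⊤ : ℕ∞) (fun x => Pb x p q) U) ∧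
  (∀ x ∈ U, ∀ p q, Pb x q p = - Pb x p q)

/-- `Pb` is a Poisson bivector on `U` : a bivector with `[π,π] = 0`
(the Jacobi identity). -/
def IsPoissonOn (U : Set (Vec n)) (Pb : Vec n → Fin n → Fin n → ℝ) : Prop :=
  IsBivectorOn U Pb ∧ ∀ x ∈ U, ∀ i j k, jacobiator Pb x i j k = 0

/-- A Poisson spray for `(U, π)`: a (smooth) vector field `V` on `T*U = U × ℝⁿ`
such that `(dp)_ξ(V_ξ) = π♯(ξ)` and `m_t^*(V) = t V` for all `t > 0`
(the latter written as `(dm_t)(t • V_ξ) = V(m_t ξ)`, where `m_t(x,y) = (x,t•y)`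
and `dm_t(v,θ) = (v, t•θ)`). -/
structure IsSpray (U : Set (Vec n)) (Pb : Vec n → Fin n → Fin n → ℝ)
    (V : Pt n → Pt n) : Prop where
  smooth : ContDiffOn ℝ (⊤ : ℕ∞) V (U ×ˢ (univ : Set (Vec n)))
  base : ∀ ξ : Pt n, ξ.1 ∈ U → (V ξ).1 = sharp Pb ξ.1 ξ.2
  homog : ∀ t : ℝ, 0 < t → ∀ ξ : Pt n, ξ.1 ∈ U →
    V (ξ.1, t • ξ.2) = (t • (V ξ).1, t • t • (V ξ).2)

/-- A local flow `φ` of the vector field `V` on `T*U = U × ℝⁿ ⊆ Pt n`, with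
open domain `D ⊆ ℝ × Pt n`. -/
structure IsLocalFlow (U : Set (Vec n)) (V : Pt n → Pt n)
    (D : Set (ℝ × Pt n)) (φ : ℝ → Pt n → Pt n) : Prop where
  isOpen_dom : IsOpen D
  mem_zero : ∀ ξ : Pt n, ξ.1 ∈ U → ((0 : ℝ), ξ) ∈ D
  init : ∀ ξ : Pt n, φ 0 ξ = ξ
  interval : ∀ (t : ℝ) (ξ : Pt n), (t, ξ) ∈ D → ∀ s ∈ uIcc (0:ℝ) t, (s, ξ) ∈ D
  invariant : ∀ (t : ℝ) (ξ : Pt n), (t, ξ) ∈ D → (φ t ξ).1 ∈ U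
  hasDeriv : ∀ (t : ℝ) (ξ : Pt n), (t, ξ) ∈ D →
    HasDerivAt (fun s => φ s ξ) (V (φ t ξ)) t
  group : ∀ (s t : ℝ) (ξ : Pt n), (t, ξ) ∈ D → (s, φ t ξ) ∈ D →
    (s + t, ξ) ∈ D ∧ φ s (φ t ξ) = φ (s + t) ξ

/-- The canonical symplectic form `ω_can = ∑ dx_i ∧ dy_i` of `T*ℝⁿ = ℝⁿ × ℝⁿ`
(constant coefficients): `ω_can(v, w) = ⟨θ_w, v̄⟩ - ⟨θ_v, w̄⟩`. -/
def omegaCan (v w : Pt n) : ℝ := ∑ i, (w.2 i * v.1 i - v.2 i * w.1 i)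

/-- The 2-form `ω := ∫₀¹ (φ_t)^* ω_can dt`. -/
def omegaInt (φ : ℝ → Pt n → Pt n) (ξ v w : Pt n) : ℝ :=
  ∫ t in (0:ℝ)..1, omegaCan (fderiv ℝ (φ t) ξ v) (fderiv ℝ (φ t) ξ w)

/-- Nondegeneracy of a 2-form at a point. -/
def Nondeg (ω : Pt n → Pt n → Pt n → ℝ) (ξ : Pt n) : Prop :=
  ∀ v : Pt n, (∀ w : Pt n, ω ξ v w = 0) → v = 0

/-- Closedness of a 2-form on `S` (`dω = 0`, expressed on constant vector
fields). -/
def ClosedOn (S : Set (Pt n)) (ω : Pt n → Pt n → Pt n → ℝ) : Prop :=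
  ∀ ξ ∈ S, ∀ u v w : Pt n,
    fderiv ℝ (fun η => ω η v w) ξ u - fderiv ℝ (fun η => ω η u w) ξ v
      + fderiv ℝ (fun η => ω η u v) ξ w = 0

/-- `ω` is a symplectic form on `S`: a smooth, bilinear, antisymmetric,
closed, nondegenerate 2-form. -/
def IsSymplecticOn (S : Set (Pt n)) (ω : Pt n → Pt n → Pt n → ℝ) : Prop :=
  (∀ ξ ∈ S, ∀ v w : Pt n, ω ξ w v = - ω ξ v w) ∧
  (∀ ξ ∈ S, ∀ (a b : ℝ) (v v' w : Pt n),
      ω ξ (a • v + b • v') w = a * ω ξ v w + b * ω ξ v' w) ∧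
  (∀ v w : Pt n, ContDiffOn ℝ (⊤ : ℕ∞) (fun ξ => ω ξ v w) S) ∧
  ClosedOn S ω ∧ (∀ ξ ∈ S, Nondeg ω ξ)

/-- The projection `p = Prod.fst : (S, ω) → (U, π)` is a Poisson map: for each
`ξ ∈ S` and `θ ∈ T*_{p(ξ)}M`, any `v` with `i_v ω = p^*θ` at `ξ` satisfies
`(dp)_ξ(v) = π♯(θ)`; i.e. the bivector inverse to `ω` pushes forward to `π`. -/
def FstIsPoissonMap (S : Set (Pt n)) (Pb : Vec n → Fin n → Fin n → ℝ)
    (ω : Pt n → Pt n → Pt n → ℝ) : Prop :=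
  ∀ ξ ∈ S, ∀ θ : Vec n, ∀ v : Pt n,
    (∀ w : Pt n, ω ξ v w = ∑ i, θ i * w.1 i) → v.1 = sharp Pb ξ.1 θ

/-- Lie bracket of vector fields on `ℝⁿ` (in components). -/
def lieVF (X Y : Vec n → Vec n) (x : Vec n) : Vec n :=
  fun q => ∑ p, (X x p * pd p (fun y => Y y q) x - Y x p * pd p (fun y => X y q) x)

/-- Lie derivative of a 1-form `β` along a vector field `X` (in components):
`(L_X β)_r = ∑_p (X_p ∂_p β_r + β_p ∂_r X_p)`. -/
def lieDer1 (X β : Vec n → Vec n) (x : Vec n) : Vec n :=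
  fun r => ∑ p, (X x p * pd p (fun y => β y r) x + β x p * pd r (fun y => X y p) x)

/-- The pairing `π(α, β)`. -/
def pbPair (Pb : Vec n → Fin n → Fin n → ℝ) (α β : Vec n → Vec n) (x : Vec n) : ℝ :=
  ∑ p, ∑ q, Pb x p q * α x p * β x q

/-- The Koszul bracket `[α, β]_π = L_{π♯α} β − L_{π♯β} α − d(π(α,β))` on
1-forms. -/
def koszul (Pb : Vec n → Fin n → Fin n → ℝ) (α β : Vec n → Vec n) (x : Vec n) :
    Vec n :=
  fun r => lieDer1 (fun y => sharp Pb y (α y)) β x r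
         - lieDer1 (fun y => sharp Pb y (β y)) α x r
         - pd r (pbPair Pb α β) x

/-- The Lie derivative `L_{π♯α}(f)` of a function along `π♯α`. -/
def LDer (Pb : Vec n → Fin n → Fin n → ℝ) (α : Vec n → Vec n) (f : Vec n → ℝ)
    (x : Vec n) : ℝ :=
  ∑ q, sharp Pb x (α x) q * pd q f x

/-- Classical covariant derivative of a 1-form `α` along a vector field `X`,
for the connection dual to the one on `TM` with Christoffel symbols `Γ`:
`(∇_X α)_q = ∑_p X_p ∂_p α_q − ∑_{p,r} Γ_{pq}^r X_p α_r`. -/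
def covD1 (Γ : Vec n → Fin n → Fin n → Fin n → ℝ) (X α : Vec n → Vec n)
    (x : Vec n) : Vec n :=
  fun q => (∑ p, X x p * pd p (fun y => α y q) x)
         - ∑ p, ∑ r, Γ x p q r * X x p * α x r

/-- The contravariant connection `∇̄` on `TM` induced by a classical connection:
`∇̄_α(V) = π♯(∇_V α) + [π♯α, V]`. -/
def nbarVF (Pb : Vec n → Fin n → Fin n → ℝ)
    (Γ : Vec n → Fin n → Fin n → Fin n → ℝ)
    (α X : Vec n → Vec n) (x : Vec n) : Vec n :=
  fun s => (∑ q, Pb x q s * covD1 Γ X α x q)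
         + lieVF (fun y => sharp Pb y (α y)) X x s

/-- The contravariant connection `∇̄` on `T*M` induced by a classical
connection: `∇̄_α(β) = ∇_{π♯β}(α) + [α, β]_π`. -/
def nbar1F (Pb : Vec n → Fin n → Fin n → ℝ)
    (Γ : Vec n → Fin n → Fin n → Fin n → ℝ)
    (α β : Vec n → Vec n) (x : Vec n) : Vec n :=
  fun r => covD1 Γ (fun y => sharp Pb y (β y)) α x r + koszul Pb α β x r

/-- Connection coefficients of `∇̄` on `TM`: `(∇̄_{dx_p} ∂_q)^r`. -/
def GbarTM (Pb : Vec n → Fin n → Fin n → ℝ)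
    (Γ : Vec n → Fin n → Fin n → Fin n → ℝ) (x : Vec n) (p q r : Fin n) : ℝ :=
  -(∑ s, Pb x s r * Γ x q s p) - pd q (fun y => Pb y p r) x

/-- Connection coefficients of `∇̄` on `T*M`: `(∇̄_{dx_p} dx_q)_r`. -/
def GbarT1 (Pb : Vec n → Fin n → Fin n → ℝ)
    (Γ : Vec n → Fin n → Fin n → Fin n → ℝ) (x : Vec n) (p q r : Fin n) : ℝ :=
  pd r (fun y => Pb y p q) x - ∑ s, Pb x q s * Γ x s r p

/-- Connection coefficients of the contravariant connection `∇_α := ∇_{π♯α}`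
on `T*M`: `(∇_{π♯ dx_p} dx_q)_r`. -/
def Gplain (Pb : Vec n → Fin n → Fin n → ℝ)
    (Γ : Vec n → Fin n → Fin n → Fin n → ℝ) (x : Vec n) (p q r : Fin n) : ℝ :=
  -(∑ s, Pb x p s * Γ x s r q)

/-- Derivative of a path `u` (of tangent or cotangent vectors) along a
cotangent path with covector components `a` over base path `γ`, for a
contravariant connection with coefficients `G` (so `(∇_a u)_r = u̇_r +
∑_{p,q} a_p u_q G_{pq}^r`). -/
def covAlong (G : Vec n → Fin n → Fin n → Fin n → ℝ) (a γ : ℝ → Vec n)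
    (u : ℝ → Vec n) (t : ℝ) : Vec n :=
  fun r => deriv (fun s => u s r) t + ∑ p, ∑ q, a t p * u t q * G (γ t) p q r

/-- Vertical component `θ_v = v − hor_ξ(v̄)` of a tangent vector
`v ∈ T_ξ(T*M)` with respect to the classical connection `Γ`. -/
def vert (Γ : Vec n → Fin n → Fin n → Fin n → ℝ) (ξ v : Pt n) : Vec n :=
  fun q => v.2 q - ∑ p, ∑ r, Γ ξ.1 p q r * v.1 p * ξ.2 r

/-- The horizontal subspace `H_ξ ⊆ T_ξ(T*M)` of the classical connection `Γ`. -/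
def Hor (Γ : Vec n → Fin n → Fin n → Fin n → ℝ) (ξ : Pt n) : Set (Pt n) :=
  {u : Pt n | ∀ q, u.2 q = ∑ p, ∑ r, Γ ξ.1 p q r * u.1 p * ξ.2 r}

/-- A contravariant connection on `T*M` over the Poisson manifold `(U, π)`:
a bilinear operation `(α, β) ↦ ∇_α β` on 1-forms, function-linear in `α` and
satisfying the Leibniz rule `∇_α(fβ) = f ∇_α β + L_{π♯α}(f) β`. -/
structure IsContraConn (U : Set (Vec n)) (Pb : Vec n → Fin n → Fin n → ℝ)
    (C : (Vec n → Vec n) → (Vec n → Vec n) → (Vec n → Vec n)) : Prop where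
  addLeft : ∀ (α α' β : Vec n → Vec n), ∀ x ∈ U,
    C (α + α') β x = C α β x + C α' β x
  addRight : ∀ (α β β' : Vec n → Vec n), ∀ x ∈ U,
    C α (β + β') x = C α β x + C α β' x
  smulLeft : ∀ f : Vec n → ℝ, ContDiffOn ℝ (⊤ : ℕ∞) f U →
    ∀ (α β : Vec n → Vec n), ∀ x ∈ U,
      C (fun y => f y • α y) β x = f x • C α β x
  leibniz : ∀ f : Vec n → ℝ, ContDiffOn ℝ (⊤ : ℕ∞) f U →
    ∀ (α β : Vec n → Vec n), ∀ x ∈ U,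
      C α (fun y => f y • β y) x = f x • C α β x + LDer Pb α f x • β x

/-- Christoffel symbols of a contravariant connection:
`∇_{dx_p}(dx_q) = ∑_r Γ_{pq}^r dx_r`. -/
def christ (C : (Vec n → Vec n) → (Vec n → Vec n) → (Vec n → Vec n))
    (x : Vec n) (p q r : Fin n) : ℝ :=
  C (fun _ => Pi.single p 1) (fun _ => Pi.single q 1) x r

/-- A smooth 1-form on `U` (in components). -/
def Smooth1F (U : Set (Vec n)) (α : Vec n → Vec n) : Prop :=
  ∀ q, ContDiffOn ℝ (⊤ : ℕ∞) (fun x => α x q) U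

/-- The pairing `g(α, β)` of a fiber metric on `T*M` with 1-forms. -/
def gPair (g : Vec n → Fin n → Fin n → ℝ) (α β : Vec n → Vec n) (x : Vec n) : ℝ :=
  ∑ p, ∑ q, g x p q * α x p * β x q

open Filter Metric
open scoped Topology NNReal

/-- `sharp` as a continuous linear map in the fiber variable. -/
def sharpCLM (Pb : Vec n → Fin n → Fin n → ℝ) (x : Vec n) : Vec n →L[ℝ] Vec n :=
  LinearMap.toContinuousLinearMap
  { toFun := fun θ => sharp Pb x θ
    map_add' := by
      intro a b; funext q; simp [sharp, mul_add, Finset.sum_add_distrib]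
    map_smul' := by
      intro c a; funext q; simp [sharp, Finset.mul_sum]; ring_nf
      exact Finset.sum_congr rfl fun p _ => by ring }

def Amap (Pb : Vec n → Fin n → Fin n → ℝ) (x : Vec n) : Pt n →L[ℝ] Pt n :=
  ((sharpCLM Pb x).comp (ContinuousLinearMap.snd ℝ (Vec n) (Vec n))).prod 0

@[simp] lemma Amap_apply (Pb : Vec n → Fin n → Fin n → ℝ) (x : Vec n) (v : Pt n) :
    Amap Pb x v = (sharp Pb x v.2, 0) := rfl

@[simp] lemma sharp_zero (Pb : Vec n → Fin n → Fin n → ℝ) (x : Vec n) :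
    sharp Pb x 0 = 0 := by funext q; simp [sharp]

lemma Amap_sq (Pb : Vec n → Fin n → Fin n → ℝ) (x : Vec n) (v : Pt n) :
    Amap Pb x (Amap Pb x v) = 0 := by
  simp [Amap_apply]
lemma hasFDerivAt_sharp {U : Set (Vec n)} (hU : IsOpen U)
    {Pb : Vec n → Fin n → Fin n → ℝ} (hPb : IsBivectorOn U Pb)
    {x : Vec n} (hx : x ∈ U) :
    HasFDerivAt (fun ξ : Pt n => sharp Pb ξ.1 ξ.2)
      ((sharpCLM Pb x).comp (ContinuousLinearMap.snd ℝ (Vec n) (Vec n)))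
      ((x, 0) : Pt n) := by
  apply hasFDerivAt_pi''
  intro q
  have key : ∀ p : Fin n, HasFDerivAt (fun ξ : Pt n => Pb ξ.1 p q * ξ.2 p)
      (Pb x p q • ((ContinuousLinearMap.proj p).comp
        (ContinuousLinearMap.snd ℝ (Vec n) (Vec n)))) ((x, 0) : Pt n) := by
    intro p
    have hdiff : DifferentiableAt ℝ (fun y => Pb y p q) x :=
      ((hPb.1 p q).contDiffAt (hU.mem_nhds hx)).differentiableAt (by simp)
    have hc : HasFDerivAt (fun ξ : Pt n => Pb ξ.1 p q)
        ((fderiv ℝ (fun y => Pb y p q) x).comp (ContinuousLinearMap.fst ℝ (Vec n) (Vec n)))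
        ((x, 0) : Pt n) :=
      by have h := hdiff.hasFDerivAt.comp ((x, 0) : Pt n) (ContinuousLinearMap.fst ℝ (Vec n) (Vec n)).hasFDerivAt; exact h
    have hd : HasFDerivAt (fun ξ : Pt n => ξ.2 p)
        ((ContinuousLinearMap.proj p).comp (ContinuousLinearMap.snd ℝ (Vec n) (Vec n)))
        ((x, 0) : Pt n) :=
      ((ContinuousLinearMap.proj p).comp (ContinuousLinearMap.snd ℝ (Vec n) (Vec n))).hasFDerivAt
    have := hc.fun_mul hd
    simpa using this
  have hsum := HasFDerivAt.fun_sum (u := Finset.univ) (fun p _ => key p)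
  exact hsum.congr_fderiv (by ext v : 2 <;> simp [sharpCLM, sharp, ContinuousLinearMap.sum_apply])
lemma spray_zero {U : Set (Vec n)} {Pb : Vec n → Fin n → Fin n → ℝ}
    {V : Pt n → Pt n} (hV : IsSpray U Pb V) {x' : Vec n} (hx' : x' ∈ U) :
    V ((x', 0) : Pt n) = 0 := by
  have h := hV.homog 2 two_pos ((x', 0) : Pt n) hx'
  rw [smul_zero] at h
  have h1 : (V ((x', 0) : Pt n)).1 = (2:ℝ) • (V ((x', 0) : Pt n)).1 := congrArg Prod.fst h
  have h2 : (V ((x', 0) : Pt n)).2 = (2:ℝ) • (2:ℝ) • (V ((x', 0) : Pt n)).2 := congrArg Prod.snd h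
  have e1 : (V ((x', 0) : Pt n)).1 = 0 := by
    have : ((2:ℝ) - 1) • (V ((x', 0) : Pt n)).1 = 0 := by
      rw [sub_smul, one_smul, ← h1, sub_self]
    simpa using (smul_eq_zero.1 this).resolve_left (by norm_num)
  have e2 : (V ((x', 0) : Pt n)).2 = 0 := by
    have : ((4:ℝ) - 1) • (V ((x', 0) : Pt n)).2 = 0 := by
      rw [sub_smul, one_smul]
      have : (4:ℝ) • (V ((x', 0) : Pt n)).2 = (2:ℝ) • (2:ℝ) • (V ((x', 0) : Pt n)).2 := by
        rw [smul_smul]; norm_num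
      rw [this, ← h2, sub_self]
    simpa using (smul_eq_zero.1 this).resolve_left (by norm_num)
  exact Prod.ext e1 e2
lemma hasFDerivAt_spray {U : Set (Vec n)} (hU : IsOpen U)
    {Pb : Vec n → Fin n → Fin n → ℝ} (hPb : IsBivectorOn U Pb)
    {V : Pt n → Pt n} (hV : IsSpray U Pb V) {x : Vec n} (hx : x ∈ U) :
    HasFDerivAt V (Amap Pb x) ((x, 0) : Pt n) := by
  have hUo : IsOpen (U ×ˢ (univ : Set (Vec n))) := hU.prod isOpen_univ
  have hmem : ((x, 0) : Pt n) ∈ U ×ˢ (univ : Set (Vec n)) := ⟨hx, trivial⟩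
  have hnh : U ×ˢ (univ : Set (Vec n)) ∈ 𝓝 ((x, 0) : Pt n) := hUo.mem_nhds hmem
  have hV1 : HasFDerivAt (fun ξ : Pt n => (V ξ).1)
      ((sharpCLM Pb x).comp (ContinuousLinearMap.snd ℝ (Vec n) (Vec n))) ((x, 0) : Pt n) := by
    refine (hasFDerivAt_sharp hU hPb hx).congr_of_eventuallyEq ?_
    filter_upwards [hnh] with ξ hξ
    exact hV.base ξ hξ.1
  have hVdiff : DifferentiableAt ℝ V ((x, 0) : Pt n) :=
    (hV.smooth.contDiffAt (hUo.mem_nhds hmem)).differentiableAt (by simp)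
  have hV2diff : DifferentiableAt ℝ (fun ξ : Pt n => (V ξ).2) ((x, 0) : Pt n) :=
    (differentiable_snd.differentiableAt).comp _ hVdiff
  have hBzero : fderiv ℝ (fun ξ : Pt n => (V ξ).2) ((x, 0) : Pt n) = 0 := by
    refine ContinuousLinearMap.ext fun u => ?_
    set B := fderiv ℝ (fun ξ : Pt n => (V ξ).2) ((x, 0) : Pt n) with hB
    have hline : HasDerivAt (fun s : ℝ => ((x, 0) : Pt n) + s • u) u 0 := by
      simpa using ((hasDerivAt_id (0:ℝ)).smul_const u).const_add ((x, 0) : Pt n)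
    have h0 : ((x, 0) : Pt n) + (0:ℝ) • u = ((x, 0) : Pt n) := by simp
    have hg : HasDerivAt (fun s : ℝ => (V (((x, 0) : Pt n) + s • u)).2) (B u) 0 := by
      have hf' : HasFDerivAt (fun ξ : Pt n => (V ξ).2) B (((x, 0) : Pt n) + (0:ℝ) • u) := by
        rw [h0]; exact hV2diff.hasFDerivAt
      have h := hf'.comp_hasDerivAt 0 hline; exact h
    have hslope : Filter.Tendsto (slope (fun s : ℝ => (V (((x, 0) : Pt n) + s • u)).2) 0)
        (nhdsWithin (0:ℝ) (Ioi 0)) (nhds (B u)) :=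
      (hasDerivAt_iff_tendsto_slope.1 hg).mono_left
        (nhdsWithin_mono 0 (fun s hs => Set.mem_compl_singleton_iff.2 (ne_of_gt hs)))
    have hVc : ContinuousAt V ((x, u.2) : Pt n) :=
      (hV.smooth.contDiffAt (hUo.mem_nhds ⟨hx, trivial⟩)).continuousAt
    have h1 : Filter.Tendsto (fun s : ℝ => ((x + s • u.1, u.2) : Pt n)) (nhds 0)
        (nhds ((x, u.2) : Pt n)) := by
      have hc : Continuous fun s : ℝ => ((x + s • u.1, u.2) : Pt n) := by continuity
      simpa using hc.tendsto' 0 _ (by simp)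
    have h2 : Filter.Tendsto (fun s : ℝ => (V (x + s • u.1, u.2)).2) (nhds 0)
        (nhds ((V ((x, u.2) : Pt n)).2)) :=
      (continuous_snd.tendsto _).comp (hVc.tendsto.comp h1)
    have hlim : Filter.Tendsto (fun s : ℝ => s • (V (x + s • u.1, u.2)).2)
        (nhdsWithin (0:ℝ) (Ioi 0)) (nhds 0) := by
      have ha : Filter.Tendsto (fun s : ℝ => s) (nhdsWithin (0:ℝ) (Ioi 0)) (nhds (0:ℝ)) :=
        tendsto_id.mono_left nhdsWithin_le_nhds
      have hb : Filter.Tendsto (fun s : ℝ => (V (x + s • u.1, u.2)).2)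
          (nhdsWithin (0:ℝ) (Ioi 0)) (nhds ((V ((x, u.2) : Pt n)).2)) :=
        h2.mono_left nhdsWithin_le_nhds
      simpa using ha.smul hb
    have hUev : ∀ᶠ s in nhds (0:ℝ), x + s • u.1 ∈ U := by
      have hc : ContinuousAt (fun s : ℝ => x + s • u.1) 0 := by fun_prop
      have h0' : x + (0:ℝ) • u.1 = x := by simp
      exact hc.preimage_mem_nhds (by rw [h0']; exact hU.mem_nhds hx)
    have hev : ∀ᶠ s in nhdsWithin (0:ℝ) (Ioi 0),
        slope (fun s : ℝ => (V (((x, 0) : Pt n) + s • u)).2) 0 s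
          = s • (V (x + s • u.1, u.2)).2 := by
      filter_upwards [hUev.filter_mono nhdsWithin_le_nhds, self_mem_nhdsWithin] with s hsU hs
      have hpt : ((x, 0) : Pt n) + s • u = ((x + s • u.1, s • u.2) : Pt n) := by
        ext <;> simp [Prod.add_def]
      have hh := hV.homog s hs ((x + s • u.1, u.2) : Pt n) hsU
      have hf0 : (V (((x, 0) : Pt n) + (0:ℝ) • u)).2 = 0 := by
        rw [h0, spray_zero hV hx]; rfl
      have hfs : (V (((x, 0) : Pt n) + s • u)).2 = s • s • (V ((x + s • u.1, u.2) : Pt n)).2 := by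
        rw [hpt]
        have := congrArg Prod.snd hh
        simpa using this
      rw [slope_def_module, hf0, hfs, sub_zero, sub_zero, smul_smul, smul_smul]
      congr 1
      field_simp
    exact (tendsto_nhds_unique (hslope.congr' hev) hlim).trans rfl
  have hV2 : HasFDerivAt (fun ξ : Pt n => (V ξ).2) (0 : Pt n →L[ℝ] Vec n) ((x, 0) : Pt n) := by
    have h := hV2diff.hasFDerivAt
    rwa [hBzero] at h
  exact hV1.prodMk hV2
lemma flow_growth {U : Set (Vec n)} {V : Pt n → Pt n} {D : Set (ℝ × Pt n)}
    {φ : ℝ → Pt n → Pt n} (hφ : IsLocalFlow U V D φ)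
    {p₀ : Pt n} {K : ℝ≥0} {Λ : Set (Pt n)} (hlip : LipschitzOnWith K V Λ)
    (hVp₀ : V p₀ = 0) {r : ℝ} (hr : 0 < r)
    (hball : closedBall p₀ r ⊆ Λ)
    {ξ : Pt n} (hD : ∀ s ∈ Icc (0:ℝ) 1, (s, ξ) ∈ D)
    (hξ : ‖ξ - p₀‖ * Real.exp (K:ℝ) < r) :
    ∀ s ∈ Icc (0:ℝ) 1, ‖φ s ξ - p₀‖ ≤ Real.exp ((K:ℝ) * s) * ‖ξ - p₀‖ := by
  have hderiv : ∀ s ∈ Icc (0:ℝ) 1, HasDerivAt (fun τ => φ τ ξ) (V (φ s ξ)) s :=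
    fun s hs => hφ.hasDeriv s ξ (hD s hs)
  have hcont : ContinuousOn (fun τ => φ τ ξ) (Icc (0:ℝ) 1) :=
    fun s hs => (hderiv s hs).continuousAt.continuousWithinAt
  have hexp1 : (1:ℝ) ≤ Real.exp (K:ℝ) := Real.one_le_exp K.coe_nonneg
  have hρ : ‖ξ - p₀‖ ≤ ‖ξ - p₀‖ * Real.exp (K:ℝ) :=
    le_mul_of_one_le_right (norm_nonneg _) hexp1
  have key : ∀ T ∈ Icc (0:ℝ) 1, (∀ s ∈ Icc (0:ℝ) T, φ s ξ ∈ closedBall p₀ r) →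
      ∀ s ∈ Icc (0:ℝ) T, ‖φ s ξ - p₀‖ ≤ Real.exp ((K:ℝ) * s) * ‖ξ - p₀‖ := by
    intro T hT hmem
    have hgr := norm_le_gronwallBound_of_norm_deriv_right_le
      (f := fun τ => φ τ ξ - p₀) (f' := fun τ => V (φ τ ξ))
      (δ := ‖ξ - p₀‖) (K := (K:ℝ)) (ε := 0) (a := 0) (b := T)
      ((hcont.mono (Icc_subset_Icc_right hT.2)).sub continuousOn_const)
      (fun s hs => (((hderiv s ⟨hs.1, hs.2.le.trans hT.2⟩).sub_const p₀).hasDerivWithinAt))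
      (by simp [hφ.init]) ?_
    · intro s hs
      have := hgr s hs
      rwa [sub_zero, gronwallBound_ε0, mul_comm] at this
    · intro s hs
      have hmem' : φ s ξ ∈ closedBall p₀ r := hmem s ⟨hs.1, hs.2.le⟩
      have hp₀ : p₀ ∈ closedBall p₀ r := mem_closedBall_self hr.le
      have hd := hlip.dist_le_mul _ (hball hmem') _ (hball hp₀)
      rw [hVp₀, dist_zero_right, dist_eq_norm] at hd
      simpa using hd
  set S := {T : ℝ | T ∈ Icc (0:ℝ) 1 ∧ ∀ s ∈ Icc (0:ℝ) T, φ s ξ ∈ closedBall p₀ r} with hS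
  have h0S : (0:ℝ) ∈ S := by
    refine ⟨⟨le_refl _, zero_le_one⟩, ?_⟩
    intro s hs
    have : s = 0 := le_antisymm hs.2 hs.1
    subst this
    rw [hφ.init]
    exact mem_closedBall_iff_norm.2 (lt_of_le_of_lt hρ hξ).le
  have hbdd : BddAbove S := ⟨1, fun T hT => hT.1.2⟩
  have hne : S.Nonempty := ⟨0, h0S⟩
  set T₀ := sSup S with hT₀
  have h1 : T₀ ∈ Icc (0:ℝ) 1 := ⟨le_csSup hbdd h0S, csSup_le hne fun T hT => hT.1.2⟩
  have hlt : ∀ s, 0 ≤ s → s < T₀ → φ s ξ ∈ closedBall p₀ r := by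
    intro s hs0 hsT
    obtain ⟨T', hT'S, hsT'⟩ := exists_lt_of_lt_csSup hne hsT
    exact hT'S.2 s ⟨hs0, hsT'.le⟩
  have hTS : T₀ ∈ S := by
    refine ⟨h1, ?_⟩
    intro s hs
    rcases lt_or_eq_of_le hs.2 with h | h
    · exact hlt s hs.1 h
    · subst h
      rcases eq_or_lt_of_le h1.1 with h0 | h0
      · rw [← h0, hφ.init]
        exact mem_closedBall_iff_norm.2 (lt_of_le_of_lt hρ hξ).le
      · have hNe : (nhdsWithin T₀ (Ico 0 T₀)).NeBot := by
          apply mem_closure_iff_nhdsWithin_neBot.1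
          rw [closure_Ico (ne_of_gt h0).symm]
          exact ⟨h0.le, le_refl _⟩
        have htend : Filter.Tendsto (fun τ => φ τ ξ) (nhdsWithin T₀ (Ico 0 T₀)) (nhds (φ T₀ ξ)) :=
          ((hcont T₀ h1).mono (fun τ hτ => ⟨hτ.1, hτ.2.le.trans h1.2⟩)).tendsto
        exact isClosed_closedBall.mem_of_tendsto htend
          (Filter.eventually_of_mem self_mem_nhdsWithin fun τ hτ => hlt τ hτ.1 hτ.2)
  have hT1 : T₀ = 1 := by
    by_contra h
    have hT₀lt : T₀ < 1 := lt_of_le_of_ne h1.2 h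
    have hballs : φ T₀ ξ ∈ ball p₀ r := by
      have := key T₀ h1 hTS.2 T₀ ⟨h1.1, le_refl _⟩
      refine mem_ball_iff_norm.2 (lt_of_le_of_lt this ?_)
      calc Real.exp ((K:ℝ) * T₀) * ‖ξ - p₀‖ ≤ Real.exp (K:ℝ) * ‖ξ - p₀‖ := by
            apply mul_le_mul_of_nonneg_right _ (norm_nonneg _)
            exact Real.exp_le_exp.2 (by nlinarith [K.coe_nonneg, h1.1, hT₀lt])
        _ < r := by rw [mul_comm]; exact hξ
    have hcontT : ContinuousAt (fun τ => φ τ ξ) T₀ := (hderiv T₀ h1).continuousAt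
    have hev : ∀ᶠ τ in nhds T₀, φ τ ξ ∈ ball p₀ r :=
      hcontT.preimage_mem_nhds (isOpen_ball.mem_nhds hballs)
    obtain ⟨η, hη, hηball⟩ := Metric.eventually_nhds_iff.1 hev
    set T' := min 1 (T₀ + η/2) with hT'
    have hT'S : T' ∈ S := by
      refine ⟨⟨le_min zero_le_one (by linarith [h1.1]), min_le_left _ _⟩, ?_⟩
      intro s hs
      by_cases hsT : s ≤ T₀
      · exact hTS.2 s ⟨hs.1, hsT⟩
      · push_neg at hsT
        refine ball_subset_closedBall (hηball ?_)
        have hsle : s ≤ T₀ + η/2 := hs.2.trans (min_le_right _ _)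
        rw [Real.dist_eq, abs_of_pos (by linarith)]
        linarith
    have h2 : T' ≤ T₀ := le_csSup hbdd hT'S
    have h3 : T₀ < T' := lt_min hT₀lt (by linarith)
    linarith
  intro s hs
  exact key 1 ⟨zero_le_one, le_refl _⟩ (hT1 ▸ hTS.2) s hs
lemma flow_deriv_at_zero {U : Set (Vec n)} (hU : IsOpen U)
    {Pb : Vec n → Fin n → Fin n → ℝ} (hPb : IsBivectorOn U Pb)
    {V : Pt n → Pt n} (hV : IsSpray U Pb V)
    {D : Set (ℝ × Pt n)} {φ : ℝ → Pt n → Pt n} (hφ : IsLocalFlow U V D φ)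
    {x : Vec n} (hx : x ∈ U)
    {W : Set (Pt n)} (hWopen : IsOpen W) (hxW : ((x, (0 : Vec n)) : Pt n) ∈ W)
    (hWD : ∀ η ∈ W, ∀ s ∈ Icc (0:ℝ) 1, (s, η) ∈ D) :
    (∀ s ∈ Icc (0:ℝ) 1, φ s ((x, 0) : Pt n) = ((x, 0) : Pt n)) ∧
    (∀ t ∈ Icc (0:ℝ) 1, HasFDerivAt (φ t)
      (ContinuousLinearMap.id ℝ (Pt n) + t • Amap Pb x) ((x, 0) : Pt n)) := by
  set p₀ : Pt n := ((x, 0) : Pt n) with hp₀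
  have hAder : HasFDerivAt V (Amap Pb x) p₀ := hasFDerivAt_spray hU hPb hV hx
  have hV0 : V p₀ = 0 := spray_zero hV hx
  have hC1 : ContDiffAt ℝ 1 V p₀ :=
    (hV.smooth.contDiffAt ((hU.prod isOpen_univ).mem_nhds ⟨hx, trivial⟩)).of_le
      (by exact_mod_cast le_top)
  obtain ⟨K, Λ, hΛ, hlip⟩ := hC1.exists_lipschitzOnWith
  have hmemΛW : Λ ∩ W ∈ 𝓝 p₀ := Filter.inter_mem hΛ (hWopen.mem_nhds hxW)
  obtain ⟨r, hr, hball⟩ := Metric.nhds_basis_closedBall.mem_iff.1 hmemΛW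
  have hballΛ : closedBall p₀ r ⊆ Λ := hball.trans inter_subset_left
  have hDp₀ : ∀ s ∈ Icc (0:ℝ) 1, (s, p₀) ∈ D := fun s hs => hWD p₀ hxW s hs
  have hfix : ∀ s ∈ Icc (0:ℝ) 1, φ s p₀ = p₀ := by
    intro s hs
    have hg := flow_growth hφ hlip hV0 hr hballΛ hDp₀ (by simpa using hr) s hs
    simp only [sub_self, norm_zero, mul_zero] at hg
    exact sub_eq_zero.1 (norm_le_zero_iff.1 hg)
  refine ⟨hfix, ?_⟩
  intro t ht
  rw [hasFDerivAt_iff_isLittleO_nhds_zero, Asymptotics.isLittleO_iff]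
  intro c hc
  set A := Amap Pb x with hA
  set M : ℝ := ‖A‖ + 1 with hM
  have hM1 : (1:ℝ) ≤ M := by have := norm_nonneg A; linarith
  have hM0 : (0:ℝ) < M := lt_of_lt_of_le one_pos hM1
  set eK : ℝ := Real.exp (K:ℝ) with heK
  have heK1 : (1:ℝ) ≤ eK := Real.one_le_exp K.coe_nonneg
  have heK0 : (0:ℝ) < eK := lt_of_lt_of_le one_pos heK1
  set eM : ℝ := Real.exp M with heM
  have heM0 : (0:ℝ) < eM := Real.exp_pos _
  set ε' : ℝ := c / (eK * eM) with hε'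
  have hε'0 : 0 < ε' := div_pos hc (mul_pos heK0 heM0)
  have hlo := (hasFDerivAt_iff_isLittleO_nhds_zero.1 hAder).def hε'0
  obtain ⟨ρ₁, hρ₁, hloball⟩ := Metric.eventually_nhds_iff.1 hlo
  set ρ₂ : ℝ := min ρ₁ r with hρ₂
  have hρ₂0 : 0 < ρ₂ := lt_min hρ₁ hr
  set δ : ℝ := ρ₂ / (2 * eK) with hδ
  have hδ0 : 0 < δ := div_pos hρ₂0 (by linarith)
  rw [Metric.eventually_nhds_iff]
  refine ⟨δ, hδ0, ?_⟩
  intro u hu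
  rw [dist_zero_right] at hu
  set ξ : Pt n := p₀ + u with hξdef
  have hξsub : ξ - p₀ = u := by simp [hξdef]
  have huδ : ‖u‖ * eK < ρ₂ / 2 := by
    rw [hδ] at hu
    calc ‖u‖ * eK < (ρ₂ / (2 * eK)) * eK := by
          apply mul_lt_mul_of_pos_right hu heK0
      _ = ρ₂ / 2 := by field_simp
  have huρ₂ : ‖u‖ < ρ₂ := by nlinarith [norm_nonneg u]
  have hξW : ξ ∈ W := by
    have : ξ ∈ closedBall p₀ r := by
      rw [mem_closedBall_iff_norm, hξsub]
      exact (huρ₂.trans_le (min_le_right _ _)).le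
    exact (hball this).2
  have hDξ : ∀ s ∈ Icc (0:ℝ) 1, (s, ξ) ∈ D := fun s hs => hWD ξ hξW s hs
  have hgrow := flow_growth hφ hlip hV0 hr hballΛ hDξ
    (by rw [hξsub]; exact huδ.trans_le ((half_le_self hρ₂0.le).trans (min_le_right _ _)))
  have hgrow' : ∀ s ∈ Icc (0:ℝ) 1, ‖φ s ξ - p₀‖ ≤ eK * ‖u‖ := by
    intro s hs
    refine (hgrow s hs).trans ?_
    rw [hξsub]
    apply mul_le_mul_of_nonneg_right _ (norm_nonneg u)
    exact Real.exp_le_exp.2 (by nlinarith [K.coe_nonneg, hs.1, hs.2])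
  have hρsmall : ∀ s ∈ Icc (0:ℝ) 1, ‖φ s ξ - p₀‖ < ρ₁ := by
    intro s hs
    calc ‖φ s ξ - p₀‖ ≤ eK * ‖u‖ := hgrow' s hs
      _ = ‖u‖ * eK := mul_comm _ _
      _ < ρ₂ / 2 := huδ
      _ < ρ₂ := by linarith
      _ ≤ ρ₁ := min_le_left _ _
  -- the comparison path
  set g : ℝ → Pt n := fun s => ξ + s • (A u) with hg
  have hgp₀ : ∀ s : ℝ, A (g s - p₀) = A u := by
    intro s
    have : g s - p₀ = u + s • (A u) := by
      rw [hg]; simp [hξdef]; abel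
    rw [this, map_add, map_smul, hA, Amap_sq, smul_zero, add_zero]
  have hhd : ∀ s ∈ Icc (0:ℝ) 1, HasDerivAt (fun τ => φ τ ξ - g τ) (V (φ s ξ) - A u) s := by
    intro s hs
    have h1 : HasDerivAt (fun τ => φ τ ξ) (V (φ s ξ)) s := hφ.hasDeriv s ξ (hDξ s hs)
    have h2 : HasDerivAt g (A u) s := by
      simpa [hg] using ((hasDerivAt_id s).smul_const (A u)).const_add ξ
    exact h1.sub h2
  have hgr := norm_le_gronwallBound_of_norm_deriv_right_le
    (f := fun τ => φ τ ξ - g τ) (f' := fun τ => V (φ τ ξ) - A u)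
    (δ := 0) (K := M) (ε := ε' * (eK * ‖u‖)) (a := 0) (b := 1)
    (fun s hs => ((hhd s hs).continuousAt.continuousWithinAt))
    (fun s hs => (hhd s ⟨hs.1, hs.2.le⟩).hasDerivWithinAt)
    (by simp [hφ.init, hg]) ?_
  · have hgrt := hgr t ht
    have hbound : gronwallBound 0 M (ε' * (eK * ‖u‖)) (t - 0) ≤ c * ‖u‖ := by
      rw [gronwallBound_of_K_ne_0 (ne_of_gt hM0)]
      have hexp : Real.exp (M * (t - 0)) ≤ eM := by
        rw [heM]
        exact Real.exp_le_exp.2 (by nlinarith [ht.1, ht.2])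
      have h1 : Real.exp (M * (t - 0)) - 1 ≤ M * eM := by nlinarith
      have hεnn : 0 ≤ ε' * (eK * ‖u‖) := by positivity
      calc (0:ℝ) * Real.exp (M * (t-0)) + ε' * (eK * ‖u‖) / M * (Real.exp (M * (t-0)) - 1)
          ≤ 0 + ε' * (eK * ‖u‖) / M * (M * eM) := by
            rw [zero_mul]
            apply add_le_add le_rfl
            apply mul_le_mul_of_nonneg_left h1 (by positivity)
        _ = ε' * (eK * eM) * ‖u‖ := by field_simp; ring
        _ = c * ‖u‖ := by rw [hε']; field_simp
    have hfinal : ‖φ t ξ - g t‖ ≤ c * ‖u‖ := hgrt.trans hbound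
    have hrw : φ t (p₀ + u) - φ t p₀ - (ContinuousLinearMap.id ℝ (Pt n) + t • A) u
        = φ t ξ - g t := by
      rw [hfix t ht, hg]
      simp [hξdef]
      abel
    rw [hrw]
    exact hfinal
  · intro s hs
    show ‖V (φ s ξ) - A u‖ ≤ M * ‖φ s ξ - g s‖ + ε' * (eK * ‖u‖)
    have hsplit : V (φ s ξ) - A u
        = (V (φ s ξ) - A (φ s ξ - p₀)) + A (φ s ξ - g s) := by
      have : A (φ s ξ - g s) = A (φ s ξ - p₀) - A u := by
        have h2 : φ s ξ - g s = (φ s ξ - p₀) - (g s - p₀) := by abel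
        rw [h2, map_sub, hgp₀]
      rw [this]; abel
    rw [hsplit]
    refine (norm_add_le _ _).trans ?_
    have hterm1 : ‖V (φ s ξ) - A (φ s ξ - p₀)‖ ≤ ε' * (eK * ‖u‖) := by
      have hmem := hρsmall s ⟨hs.1, hs.2.le⟩
      have := hloball (y := φ s ξ - p₀) (by rwa [dist_zero_right])
      simp only [hV0, sub_zero] at this
      have hre : p₀ + (φ s ξ - p₀) = φ s ξ := by abel
      rw [hre] at this
      refine this.trans ?_
      exact mul_le_mul_of_nonneg_left (hgrow' s ⟨hs.1, hs.2.le⟩) hε'0.le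
    have hterm2 : ‖A (φ s ξ - g s)‖ ≤ M * ‖φ s ξ - g s‖ := by
      refine (A.le_opNorm _).trans ?_
      apply mul_le_mul_of_nonneg_right _ (norm_nonneg _)
      rw [hM]; linarith
    linarith [hterm1, hterm2]

/-- At points `0_x` of the zero section, with respect to the canonical
identification `T_{0_x}(T*M) ≅ T_x M ⊕ T*_x M`, `v ↦ (v̄, θ_v)`, the 2-form
`ω = ∫₀¹ (φ_t)^* ω_can dt` is given by
`ω_{0_x}(v, w) = ⟨θ_w, v̄⟩ − ⟨θ_v, w̄⟩ + π(θ_v, θ_w)`;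
in particular `ω` is nondegenerate at every point of the zero section. -/
theorem omega_at_zero_section
    {n : ℕ} (U : Set (Vec n)) (hU : IsOpen U)
    (Pb : Vec n → Fin n → Fin n → ℝ) (hPb : IsPoissonOn U Pb)
    (V : Pt n → Pt n) (hV : IsSpray U Pb V)
    (D : Set (ℝ × Pt n)) (φ : ℝ → Pt n → Pt n) (hφ : IsLocalFlow U V D φ)
    (x : Vec n) (hx : x ∈ U)
    -- the flow is defined for `t ∈ [0,1]` on a neighborhood `W` of `0_x`
    (W : Set (Pt n)) (hWopen : IsOpen W) (hxW : ((x, (0 : Vec n)) : Pt n) ∈ W)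
    (hWD : ∀ η ∈ W, ∀ s ∈ Icc (0:ℝ) 1, (s, η) ∈ D) :
    (∀ v w : Pt n,
      omegaInt φ ((x, (0 : Vec n)) : Pt n) v w
        = (∑ i, (w.2 i * v.1 i - v.2 i * w.1 i))
          + ∑ p, ∑ q, Pb x p q * v.2 p * w.2 q) ∧
    Nondeg (omegaInt φ) ((x, (0 : Vec n)) : Pt n) := by
  obtain ⟨hfix, hder⟩ := flow_deriv_at_zero hU hPb.1 hV hφ hx hWopen hxW hWD
  have hanti := hPb.1.2 x hx
  have happ : ∀ t ∈ Icc (0:ℝ) 1, ∀ v : Pt n,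
      fderiv ℝ (φ t) ((x, 0) : Pt n) v = (v.1 + t • sharp Pb x v.2, v.2) := by
    intro t ht v
    rw [(hder t ht).fderiv]
    simp only [ContinuousLinearMap.add_apply, ContinuousLinearMap.coe_id', id_eq,
      ContinuousLinearMap.coe_smul', Pi.smul_apply, Amap_apply]
    ext i
    · simp [Prod.add_def]
    · simp [Prod.add_def]
  have main : ∀ v w : Pt n,
      omegaInt φ ((x, (0 : Vec n)) : Pt n) v w
        = (∑ i, (w.2 i * v.1 i - v.2 i * w.1 i))
          + ∑ p, ∑ q, Pb x p q * v.2 p * w.2 q := by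
    intro v w
    set C₀ : ℝ := ∑ i, (w.2 i * v.1 i - v.2 i * w.1 i) with hC₀
    set Tπ : ℝ := ∑ p, ∑ q, Pb x p q * v.2 p * w.2 q with hTπ
    set C₂ : ℝ := ∑ i, (w.2 i * sharp Pb x v.2 i - v.2 i * sharp Pb x w.2 i) with hC₂
    have hC₂T : C₂ = 2 * Tπ := by
      have h1 : ∑ i, w.2 i * sharp Pb x v.2 i = Tπ := by
        rw [hTπ]
        simp only [sharp, Finset.mul_sum]
        rw [Finset.sum_comm]
        exact Finset.sum_congr rfl fun p _ => Finset.sum_congr rfl fun q _ => by ring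
      have h2 : ∑ i, v.2 i * sharp Pb x w.2 i = -Tπ := by
        rw [hTπ, ← Finset.sum_neg_distrib]
        simp only [sharp, Finset.mul_sum]
        refine Finset.sum_congr rfl fun p _ => ?_
        rw [← Finset.sum_neg_distrib]
        refine Finset.sum_congr rfl fun q _ => ?_
        rw [hanti q p]
        ring
      rw [hC₂, Finset.sum_sub_distrib, h1, h2]
      ring
    have heqOn : EqOn (fun t => omegaCan (fderiv ℝ (φ t) ((x, 0) : Pt n) v)
        (fderiv ℝ (φ t) ((x, 0) : Pt n) w)) (fun t => C₀ + t * C₂) (uIcc (0:ℝ) 1) := by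
      intro t ht
      rw [uIcc_of_le zero_le_one] at ht
      simp only
      rw [happ t ht v, happ t ht w]
      simp only [omegaCan, hC₀, hC₂]
      rw [Finset.mul_sum, ← Finset.sum_add_distrib]
      refine Finset.sum_congr rfl fun i _ => ?_
      simp only [Pi.add_apply, Pi.smul_apply, smul_eq_mul]
      ring
    have : omegaInt φ ((x, (0 : Vec n)) : Pt n) v w = ∫ t in (0:ℝ)..1, (C₀ + t * C₂) := by
      rw [omegaInt]
      exact intervalIntegral.integral_congr heqOn
    rw [this]
    rw [intervalIntegral.integral_add intervalIntegrable_const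
      ((by fun_prop : Continuous fun t : ℝ => t * C₂).intervalIntegrable _ _)]
    rw [intervalIntegral.integral_const, intervalIntegral.integral_mul_const, integral_id]
    rw [hC₂T]
    simp only [smul_eq_mul]
    ring
  refine ⟨main, ?_⟩
  intro v hv
  have hv2 : ∀ q, v.2 q = 0 := by
    intro q
    have h := hv (((Pi.single q 1 : Vec n), 0) : Pt n)
    rw [main] at h
    simpa [Pi.single_apply, Finset.sum_ite_eq', mul_comm] using h
  have hv2' : v.2 = 0 := funext hv2
  have hv1 : ∀ i, v.1 i = 0 := by
    intro i
    have h := hv ((0, (Pi.single i 1 : Vec n)) : Pt n)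
    rw [main] at h
    simpa [hv2', Pi.single_apply, Finset.sum_ite_eq', mul_comm] using h
  exact Prod.ext (funext hv1) hv2'

end PoissonPaper
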